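/- (Menon's identity.) For every positive integer $n$, $$\sum_{\substack{1 \le m \le n \\ \gcd(m,n) = 1}} \gcd(m - 1, n) \,=\, \varphi(n)\,\tau(n),$$ where $\varphi$ is Euler's totient function and $\tau(n)$ is the number of positive divisors of $n$. -/

import Mathlib

open Finset

lemma key_count (n d : ℕ) (hn : 2 ≤ n) (hd : d ∣ n) (hd0 : 0 < d) :
    Nat.totient d *
      ((Finset.Icc 1 n).filter (fun m => Nat.gcd m n = 1 ∧ d ∣ m - 1)).card
      = Nat.totient n := by
  haveI : NeZero n := ⟨by omega⟩
  haveI : NeZero d := ⟨hd0.ne'⟩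
  haveI : Fact (1 < n) := ⟨hn⟩
  set f := ZMod.unitsMap hd with hf
  have hsurj : Function.Surjective f := ZMod.unitsMap_surjective hd
  -- the finset is in bijection with the kernel of f
  have hcast : ∀ m : ℕ, ((ZMod.castHom hd (ZMod d)) ((m : ZMod n)) : ZMod d) = (m : ZMod d) := by
    intro m
    simp [ZMod.castHom_apply, ZMod.cast_natCast hd]
  have hcard : ((Finset.Icc 1 n).filter (fun m => Nat.gcd m n = 1 ∧ d ∣ m - 1)).card
      = (Finset.univ.filter (fun u : (ZMod n)ˣ => f u = 1)).card := by
    apply Finset.card_bij (fun m hm => ZMod.unitOfCoprime m (by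
      simp only [Finset.mem_filter] at hm; exact hm.2.1))
    · intro m hm
      simp only [Finset.mem_filter, Finset.mem_Icc] at hm ⊢
      obtain ⟨⟨h1, h2⟩, hcop, hdvd⟩ := hm
      refine ⟨Finset.mem_univ _, ?_⟩
      ext
      rw [hf]
      show ((ZMod.castHom hd (ZMod d)) ((m : ZMod n)) : ZMod d) = 1
      rw [hcast m]
      have : (m : ZMod d) = ((1 : ℕ) : ZMod d) := by
        rw [ZMod.natCast_eq_natCast_iff]
        exact ((Nat.modEq_iff_dvd' h1).mpr hdvd).symm
      simpa using this
    · intro m hm m' hm' h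
      simp only [Finset.mem_filter, Finset.mem_Icc] at hm hm'
      have hmn : m < n := by
        rcases lt_or_eq_of_le hm.1.2 with h' | h'
        · exact h'
        · exfalso; have := hm.2.1; rw [h'] at this; simp [Nat.gcd_self] at this; omega
      have hmn' : m' < n := by
        rcases lt_or_eq_of_le hm'.1.2 with h' | h'
        · exact h'
        · exfalso; have := hm'.2.1; rw [h'] at this; simp [Nat.gcd_self] at this; omega
      have : (m : ZMod n) = (m' : ZMod n) := by
        have := congrArg (fun u : (ZMod n)ˣ => (u : ZMod n)) h
        simpa [ZMod.coe_unitOfCoprime] using this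
      have := congrArg ZMod.val this
      rwa [ZMod.val_cast_of_lt hmn, ZMod.val_cast_of_lt hmn'] at this
    · intro u hu
      simp only [Finset.mem_filter, Finset.mem_univ, true_and] at hu
      refine ⟨(u : ZMod n).val, ?_, ?_⟩
      · have hlt : (u : ZMod n).val < n := ZMod.val_lt _
        have hne : (u : ZMod n).val ≠ 0 := by
          intro h0
          have : (u : ZMod n) = 0 := by rwa [ZMod.val_eq_zero] at h0
          exact Units.ne_zero u this
        have hcop : Nat.gcd ((u : ZMod n).val) n = 1 := ZMod.val_coe_unit_coprime u
        have hdvd : d ∣ (u : ZMod n).val - 1 := by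
          have h1 : ((((u : ZMod n).val : ℕ) : ZMod n)) = (u : ZMod n) := ZMod.natCast_rightInverse _
          have h2 : (((u : ZMod n).val : ℕ) : ZMod d) = 1 := by
            have := congrArg (fun v : (ZMod d)ˣ => (v : ZMod d)) hu
            simp only [Units.val_one] at this
            rw [hf] at this
            calc (((u : ZMod n).val : ℕ) : ZMod d)
                = ((ZMod.castHom hd (ZMod d)) ((((u : ZMod n).val : ℕ) : ZMod n)) : ZMod d) := (hcast _).symm
              _ = ((ZMod.castHom hd (ZMod d)) ((u : ZMod n)) : ZMod d) := by rw [h1]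
              _ = 1 := this
          have h3 : ((u : ZMod n).val : ℕ) ≡ 1 [MOD d] := by
            rw [← ZMod.natCast_eq_natCast_iff]
            simpa using h2
          have h4 : 1 ≤ (u : ZMod n).val := Nat.one_le_iff_ne_zero.mpr hne
          exact (Nat.modEq_iff_dvd' h4).mp h3.symm
        simp only [Finset.mem_filter, Finset.mem_Icc]
        exact ⟨⟨Nat.one_le_iff_ne_zero.mpr hne, hlt.le⟩, hcop, hdvd⟩
      · ext
        simp [ZMod.coe_unitOfCoprime, ZMod.natCast_rightInverse _]
  rw [hcard]
  -- kernel cardinality argument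
  have h1 : (Finset.univ.filter (fun u : (ZMod n)ˣ => f u = 1)).card
      = Nat.card f.ker := by
    rw [Nat.card_eq_fintype_card, ← Fintype.card_subtype]
    exact Fintype.card_congr (Equiv.subtypeEquivRight (fun x => by simp [MonoidHom.mem_ker]))
  have h2 : f.ker.index = Nat.card (ZMod d)ˣ :=
    Nat.card_congr (QuotientGroup.quotientKerEquivOfSurjective f hsurj).toEquiv
  have h3 : Nat.card f.ker * f.ker.index = Nat.card (ZMod n)ˣ := f.ker.card_mul_index
  have hud : Nat.card (ZMod d)ˣ = Nat.totient d := by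
    rw [Nat.card_eq_fintype_card, ZMod.card_units_eq_totient]
  have hun : Nat.card (ZMod n)ˣ = Nat.totient n := by
    rw [Nat.card_eq_fintype_card, ZMod.card_units_eq_totient]
  rw [h2, hud, hun] at h3
  rw [h1, mul_comm]
  exact h3

/-- Menon's identity: `∑_{1 ≤ m ≤ n, gcd(m,n)=1} gcd(m-1, n) = φ(n) τ(n)`. -/
theorem stmt4 (n : ℕ) (hn : 0 < n) :
    (∑ m ∈ (Finset.Icc 1 n).filter (fun m => Nat.gcd m n = 1), Nat.gcd (m - 1) n)
      = Nat.totient n * n.divisors.card := by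
  rcases eq_or_lt_of_le (show 1 ≤ n from hn) with h1 | h2
  · simp [← h1]
  · -- n ≥ 2
    have hn2 : 2 ≤ n := h2
    have step1 : ∀ m : ℕ, Nat.gcd (m - 1) n
        = ∑ e ∈ n.divisors.filter (· ∣ m - 1), Nat.totient e := by
      intro m
      conv_lhs => rw [← Nat.sum_totient (Nat.gcd (m - 1) n)]
      congr 1
      ext e
      simp only [Nat.mem_divisors, Finset.mem_filter, Nat.dvd_gcd_iff]
      constructor
      · rintro ⟨⟨h1, h2⟩, _⟩; exact ⟨⟨h2, by omega⟩, h1⟩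
      · rintro ⟨⟨h1, h2⟩, h3⟩; exact ⟨⟨h3, h1⟩, fun hc => by
          simp [Nat.gcd_eq_zero_iff] at hc; omega⟩
    calc (∑ m ∈ (Finset.Icc 1 n).filter (fun m => Nat.gcd m n = 1), Nat.gcd (m - 1) n)
        = ∑ m ∈ (Finset.Icc 1 n).filter (fun m => Nat.gcd m n = 1),
            ∑ e ∈ n.divisors.filter (· ∣ m - 1), Nat.totient e := by
          exact Finset.sum_congr rfl (fun m _ => step1 m)
      _ = ∑ m ∈ (Finset.Icc 1 n).filter (fun m => Nat.gcd m n = 1),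
            ∑ e ∈ n.divisors, if e ∣ m - 1 then Nat.totient e else 0 := by
          exact Finset.sum_congr rfl (fun m _ => (Finset.sum_filter _ _))
      _ = ∑ e ∈ n.divisors, ∑ m ∈ (Finset.Icc 1 n).filter (fun m => Nat.gcd m n = 1),
            if e ∣ m - 1 then Nat.totient e else 0 := Finset.sum_comm
      _ = ∑ e ∈ n.divisors, Nat.totient e *
            ((Finset.Icc 1 n).filter (fun m => Nat.gcd m n = 1 ∧ e ∣ m - 1)).card := by
          refine Finset.sum_congr rfl (fun e _ => ?_)
          rw [← Finset.sum_filter, Finset.filter_filter, Finset.sum_const, smul_eq_mul, mul_comm]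
      _ = ∑ e ∈ n.divisors, Nat.totient n := by
          refine Finset.sum_congr rfl (fun e he => ?_)
          rw [Nat.mem_divisors] at he
          exact key_count n e hn2 he.1 (Nat.pos_of_dvd_of_pos he.1 hn)
      _ = Nat.totient n * n.divisors.card := by
          rw [Finset.sum_const, smul_eq_mul, mul_comm]
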